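/- Let $A_d = 1 - \frac{1}{2d}$ and $s^{(d)}_n = 2(d-1) n^{\frac{d-2}{d-1}}$. There exists a constant $C > 0$ such that for all sufficiently large $d$, $\sum_{n=2}^{\infty} \frac{A_d^{n-1}}{s^{(d)}_n} \leq C \frac{\log d}{d}$. -/
import Mathlib

open Real Filter

set_option maxHeartbeats 1000000 in

theorem stmt7 :
    ∃ C : ℝ, 0 < C ∧ ∀ᶠ d : ℕ in atTop,
      (∑' n : ℕ, (1 - 1 / (2 * (d : ℝ))) ^ (n + 1) /
          (2 * ((d : ℝ) - 1) * ((n : ℝ) + 2) ^ (((d : ℝ) - 2) / ((d : ℝ) - 1)))) ≤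
        C * Real.log d / d := by
  refine ⟨12, by norm_num, ?_⟩
  filter_upwards [eventually_ge_atTop 24] with d hd
  have hD : (24:ℝ) ≤ (d:ℝ) := by exact_mod_cast hd
  set D : ℝ := (d:ℝ) with hDdef
  have hD0 : (0:ℝ) < D := by linarith
  have hD1 : (1:ℝ) < D := by linarith
  have he : (2.7182818283 : ℝ) < Real.exp 1 := Real.exp_one_gt_d9
  have he3 : Real.exp 1 < 2.7182818286 := Real.exp_one_lt_d9
  set t : ℝ := 1/(12*D) with htdef
  have ht0 : 0 < t := by positivity
  have ht1 : t ≤ 1/5 := by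
    rw [htdef, div_le_div_iff₀ (by linarith) (by norm_num)]; linarith
  set x : ℝ := Real.exp (-t) with hxdef
  clear_value D t x
  have hx0 : 0 < x := by rw [hxdef]; exact Real.exp_pos _
  have hx1 : x < 1 := by
    rw [hxdef, Real.exp_lt_one_iff]; linarith
  have hsum : HasSum (fun n : ℕ => x ^ (n+1) / (n+1)) (-Real.log (1 - x)) :=
    Real.hasSum_pow_div_log_of_abs_lt_one (by rw [abs_of_pos hx0]; exact hx1)
  have hgsum : HasSum (fun n : ℕ => Real.exp 1 / (D-1) * (x ^ (n+1) / (n+1)))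
      (Real.exp 1 / (D-1) * (-Real.log (1 - x))) := hsum.mul_left _
  have hA0 : (0:ℝ) ≤ 1 - 1/(2*D) := by
    have : 1/(2*D) ≤ 1 := by rw [div_le_one (by linarith)]; linarith
    linarith
  -- pointwise bound
  have hpt : ∀ n : ℕ, (1 - 1 / (2 * D)) ^ (n + 1) /
      (2 * (D - 1) * ((n : ℝ) + 2) ^ ((D - 2) / (D - 1))) ≤
      Real.exp 1 / (D-1) * (x ^ (n+1) / (n+1)) := by
    intro n
    set N : ℝ := (n:ℝ) + 2 with hNdef
    clear_value N
    have hn0 : (0:ℝ) ≤ (n:ℝ) := Nat.cast_nonneg n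
    have hN0 : (0:ℝ) < N := by rw [hNdef]; linarith
    have hN2 : (2:ℝ) ≤ N := by rw [hNdef]; linarith
    -- rewrite the rpow
    have hD1' : D - 1 ≠ 0 := by linarith
    have hNp : N ^ ((D-2)/(D-1)) = N * Real.exp (-(Real.log N/(D-1))) := by
      rw [Real.rpow_def_of_pos hN0]
      have hfrac : (D-2)/(D-1) = 1 - 1/(D-1) := by
        rw [one_sub_div hD1']; congr 1; ring
      rw [hfrac, show Real.log N * (1 - 1/(D-1)) = Real.log N + (-(Real.log N/(D-1))) from
        by ring, Real.exp_add, Real.exp_log hN0]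
    -- log N ≤ N / e
    have hlogN : Real.log N ≤ N / Real.exp 1 := by
      have h2 : Real.log (N / Real.exp 1) ≤ N / Real.exp 1 - 1 :=
        Real.log_le_sub_one_of_pos (by positivity)
      have h3 : Real.log (N / Real.exp 1) = Real.log N - 1 := by
        rw [Real.log_div (ne_of_gt hN0) (Real.exp_ne_zero 1), Real.log_exp]
      linarith
    have h5 : Real.log N / (D-1) ≤ 5*N/(12*D) := by
      have h6 : Real.log N / (D-1) ≤ (N / Real.exp 1) / (D-1) :=
        div_le_div_of_nonneg_right hlogN (by linarith)
      have h7 : (N / Real.exp 1) / (D-1) ≤ 5*N/(12*D) := by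
        rw [div_div, div_le_div_iff₀ (mul_pos (Real.exp_pos 1) (by linarith)) (by linarith)]
        have hcoe : (12*D:ℝ) ≤ 5*(Real.exp 1*(D-1)) := by nlinarith [he, hD]
        nlinarith [mul_le_mul_of_nonneg_left hcoe (by linarith : (0:ℝ) ≤ N)]
      linarith
    -- bound A^{n+1}
    have hA : (1 - 1/(2*D)) ≤ Real.exp (-(1/(2*D))) := by
      have := Real.add_one_le_exp (-(1/(2*D))); linarith
    have hApow : (1 - 1/(2*D)) ^ (n+1) ≤ Real.exp (((n:ℝ)+1) * (-(1/(2*D)))) := by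
      calc (1 - 1/(2*D)) ^ (n+1) ≤ (Real.exp (-(1/(2*D)))) ^ (n+1) :=
            pow_le_pow_left₀ hA0 hA _
        _ = Real.exp (((n:ℝ)+1) * (-(1/(2*D)))) := by
            rw [← Real.exp_nat_mul]; push_cast; ring_nf
    -- main numerator bound
    have hkey : (1 - 1/(2*D)) ^ (n+1) * Real.exp (Real.log N/(D-1)) ≤
        Real.exp 1 * x ^ (n+1) := by
      have hx' : Real.exp 1 * x ^ (n+1) = Real.exp (1 + ((n:ℝ)+1) * (-t)) := by
        rw [Real.exp_add, hxdef, ← Real.exp_nat_mul]; push_cast; ring_nf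
      rw [hx']
      calc (1 - 1/(2*D)) ^ (n+1) * Real.exp (Real.log N/(D-1))
          ≤ Real.exp (((n:ℝ)+1) * (-(1/(2*D)))) * Real.exp (5*N/(12*D)) :=
            mul_le_mul hApow (Real.exp_le_exp.mpr h5) (le_of_lt (Real.exp_pos _))
              (le_of_lt (Real.exp_pos _))
        _ = Real.exp (((n:ℝ)+1) * (-(1/(2*D))) + 5*N/(12*D)) := by rw [← Real.exp_add]
        _ ≤ Real.exp (1 + ((n:ℝ)+1) * (-t)) := by
            apply Real.exp_le_exp.mpr
            have hu : (1:ℝ)/(2*D) = 6*t := by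
              rw [htdef, mul_one_div, div_eq_div_iff (by linarith) (by linarith)]; ring
            have hv : 5*N/(12*D) = 5*N*t := by rw [htdef]; ring
            rw [hu, hv, hNdef]
            nlinarith [ht0, ht1]
    -- combine
    have hrw : (1 - 1/(2*D)) ^ (n+1) / (2*(D-1) * (N * Real.exp (-(Real.log N/(D-1)))))
        = (1 - 1/(2*D)) ^ (n+1) * Real.exp (Real.log N/(D-1)) / (2*(D-1)*N) := by
      rw [Real.exp_neg, show 2*(D-1) * (N * (Real.exp (Real.log N/(D-1)))⁻¹)
          = (2*(D-1)*N) / Real.exp (Real.log N/(D-1)) from by ring, div_div_eq_mul_div]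
    rw [hNp, hrw]
    have h2N : ((n:ℝ)+1) ≤ 2*N := by rw [hNdef]; linarith
    have hden : (D-1)*((n:ℝ)+1) ≤ 2*(D-1)*N := by
      calc (D-1)*((n:ℝ)+1) ≤ (D-1)*(2*N) := mul_le_mul_of_nonneg_left h2N (by linarith)
        _ = 2*(D-1)*N := by ring
    have hgrw : Real.exp 1 / (D-1) * (x ^ (n+1) / ((n:ℕ)+1 : ℝ)) =
        Real.exp 1 * x ^ (n+1) / ((D-1)*((n:ℝ)+1)) := by
      push_cast; rw [div_mul_div_comm]
    calc (1 - 1/(2*D)) ^ (n+1) * Real.exp (Real.log N/(D-1)) / (2*(D-1)*N)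
        ≤ Real.exp 1 * x ^ (n+1) / (2*(D-1)*N) := by
          exact div_le_div_of_nonneg_right hkey (mul_pos (show (0:ℝ) < 2*(D-1) by linarith) hN0).le
      _ ≤ Real.exp 1 * x ^ (n+1) / ((D-1)*((n:ℝ)+1)) := by
          exact div_le_div_of_nonneg_left (by positivity)
            (mul_pos (show (0:ℝ) < D-1 by linarith) (by linarith : (0:ℝ) < (n:ℝ)+1)) hden
      _ = Real.exp 1 / (D-1) * (x ^ (n+1) / ((n:ℕ)+1 : ℝ)) := hgrw.symm
  -- summability and tsum comparison
  have hf : Summable (fun n : ℕ => (1 - 1/(2*D))^(n+1) /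
      (2*(D-1)*((n:ℝ)+2)^((D-2)/(D-1)))) :=
    Summable.of_nonneg_of_le
      (fun n => div_nonneg (pow_nonneg hA0 _)
        (mul_nonneg (by linarith) (Real.rpow_nonneg (by positivity) _)))
      hpt hgsum.summable
  have hlogD0 : 0 ≤ Real.log D := Real.log_nonneg (by linarith)
  have h1x : 1/(24*D) ≤ 1 - x := by
    have hxle : x ≤ 1/(1+t) := by
      rw [hxdef, Real.exp_neg, one_div]
      exact inv_anti₀ (by linarith) (by linarith [Real.add_one_le_exp t])
    have h2 : 1/(1+t) ≤ 1 - t/2 := by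
      rw [div_le_iff₀ (by linarith)]; nlinarith [ht0, ht1]
    have h3 : 1/(24*D) = t/2 := by rw [htdef]; ring
    linarith
  have h1x0 : (0:ℝ) < 1 - x := by
    have : (0:ℝ) < 1/(24*D) := by positivity
    linarith
  have hlog1 : -Real.log (1-x) ≤ Real.log (24*D) := by
    have h4 : Real.log (1/(24*D)) ≤ Real.log (1-x) :=
      Real.log_le_log (by positivity) h1x
    rw [one_div, Real.log_inv] at h4
    linarith
  have hlog2 : Real.log (24*D) ≤ 2 * Real.log D := by
    rw [Real.log_mul (by norm_num) (ne_of_gt hD0)]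
    have : Real.log 24 ≤ Real.log D := Real.log_le_log (by norm_num) hD
    linarith
  calc (∑' n : ℕ, (1 - 1/(2*D))^(n+1) / (2*(D-1)*((n:ℝ)+2)^((D-2)/(D-1))))
      ≤ ∑' n : ℕ, Real.exp 1 / (D-1) * (x ^ (n+1) / (n+1)) :=
        Summable.tsum_le_tsum hpt hf hgsum.summable
    _ = Real.exp 1 / (D-1) * (-Real.log (1-x)) := hgsum.tsum_eq
    _ ≤ Real.exp 1 / (D-1) * (2 * Real.log D) := by
        apply mul_le_mul_of_nonneg_left (le_trans hlog1 hlog2)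
          (div_nonneg (Real.exp_pos 1).le (by linarith))
    _ ≤ 12 * Real.log D / D := by
        rw [div_mul_eq_mul_div, div_le_div_iff₀ (by linarith) hD0]
        have hcoef : 2*Real.exp 1*D ≤ 12*(D-1) := by nlinarith [he3, hD]
        nlinarith [mul_le_mul_of_nonneg_right hcoef hlogD0]
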